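/- arXiv:2412.15613 — 2 statements merged into one kernel-verified Lean document; each statement's English description precedes it below -/
import Mathlib

section
/- Let g : ℂ → ℂ be entire and let n be a nonnegative integer. Then for all z ∈ ℂ, the n-th derivative of the function z ↦ g(e^z) equals Σ_{i=0}^{n} S(n,i) e^{iz} g^{(i)}(e^z), where S(n,i) are the Stirling numbers of the second kind. -/
/-- Stirling numbers of the second kind `S(n,k)` (number of partitions of an `n`-set into `k`
nonempty blocks): `S(0,0) = 1`, `S(n,0) = 0` for `n ≥ 1`, `S(0,k) = 0` for `k ≥ 1`, and
`S(n+1,k+1) = (k+1)·S(n,k+1) + S(n,k)`. -/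
def stirl : ℕ → ℕ → ℕ
  | 0, 0 => 1
  | _ + 1, 0 => 0
  | 0, _ + 1 => 0
  | n + 1, k + 1 => (k + 1) * stirl n (k + 1) + stirl n k

lemma stirl_zero_of_lt : ∀ n k, n < k → stirl n k = 0 := by
  intro n
  induction n with
  | zero => intro k hk; cases k with
    | zero => omega
    | succ k => rfl
  | succ n ih =>
    intro k hk
    cases k with
    | zero => omega
    | succ k =>
      simp [stirl, ih (k+1) (by omega), ih k (by omega)]

/-- For entire `g` and `n ∈ ℕ`, the `n`-th derivative of `z ↦ g(e^z)` equals
`Σ_{i=0}^n S(n,i) e^{iz} g^{(i)}(e^z)` where `S(n,i)` are the Stirling numbers of the second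
kind. -/
theorem stmt7 (g : ℂ → ℂ) (hg : Differentiable ℂ g) (n : ℕ) (z : ℂ) :
    iteratedDeriv n (fun w : ℂ => g (Complex.exp w)) z
      = ∑ i ∈ Finset.range (n + 1),
          (stirl n i : ℂ) * Complex.exp ((i : ℂ) * z) * iteratedDeriv i g (Complex.exp z) := by
  induction n generalizing z with
  | zero => simp [stirl]
  | succ n ih =>
    have hdi : ∀ i : ℕ, Differentiable ℂ (iteratedDeriv i g) := fun i =>
      ContDiff.differentiable_iteratedDeriv i (hg.contDiff (n := ⊤))
        (by exact_mod_cast lt_top_iff_ne_top.2 (by simp))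
    -- derivative of each term
    have hterm : ∀ i : ℕ, HasDerivAt
        (fun w : ℂ => (stirl n i : ℂ) * Complex.exp ((i : ℂ) * w) * iteratedDeriv i g (Complex.exp w))
        ((stirl n i : ℂ) * ((i : ℂ) * Complex.exp ((i : ℂ) * z)) * iteratedDeriv i g (Complex.exp z)
          + (stirl n i : ℂ) * Complex.exp ((i : ℂ) * z)
              * (iteratedDeriv (i + 1) g (Complex.exp z) * Complex.exp z)) z := by
      intro i
      have h1 : HasDerivAt (fun w : ℂ => (stirl n i : ℂ) * Complex.exp ((i : ℂ) * w))
          ((stirl n i : ℂ) * ((i : ℂ) * Complex.exp ((i : ℂ) * z))) z := by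
        have := ((hasDerivAt_id z).const_mul (i : ℂ)).cexp.const_mul (stirl n i : ℂ)
        simpa [mul_comm] using this
      have h2 : HasDerivAt (fun w : ℂ => iteratedDeriv i g (Complex.exp w))
          (iteratedDeriv (i + 1) g (Complex.exp z) * Complex.exp z) z := by
        have hg' : HasDerivAt (iteratedDeriv i g) (iteratedDeriv (i + 1) g (Complex.exp z))
            (Complex.exp z) := by
          simpa only [iteratedDeriv_succ] using ((hdi i) (Complex.exp z)).hasDerivAt
        exact hg'.comp z (Complex.hasDerivAt_exp z)
      exact h1.mul h2
    have hsum : HasDerivAt (fun w : ℂ => ∑ i ∈ Finset.range (n + 1),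
        (stirl n i : ℂ) * Complex.exp ((i : ℂ) * w) * iteratedDeriv i g (Complex.exp w))
        (∑ i ∈ Finset.range (n + 1),
          ((stirl n i : ℂ) * ((i : ℂ) * Complex.exp ((i : ℂ) * z)) * iteratedDeriv i g (Complex.exp z)
          + (stirl n i : ℂ) * Complex.exp ((i : ℂ) * z)
              * (iteratedDeriv (i + 1) g (Complex.exp z) * Complex.exp z))) z :=
      HasDerivAt.fun_sum fun i _ => hterm i
    rw [iteratedDeriv_succ]
    have hfe : deriv (iteratedDeriv n fun w => g (Complex.exp w)) z
        = deriv (fun w : ℂ => ∑ i ∈ Finset.range (n + 1),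
            (stirl n i : ℂ) * Complex.exp ((i : ℂ) * w) * iteratedDeriv i g (Complex.exp w)) z := by
      congr 1
      funext w
      exact ih w
    rw [hfe, hsum.deriv]
    -- now the algebra
    rw [Finset.sum_add_distrib]
    conv_rhs => rw [Finset.sum_range_succ']
    have h0 : ((stirl (n + 1) 0 : ℂ)) * Complex.exp (((0 : ℕ) : ℂ) * z)
        * iteratedDeriv 0 g (Complex.exp z) = 0 := by
      norm_num [stirl]
    rw [h0, add_zero]
    have hsplit : ∀ k ∈ Finset.range (n + 1),
        (stirl (n + 1) (k + 1) : ℂ) * Complex.exp (((k + 1 : ℕ) : ℂ) * z)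
            * iteratedDeriv (k + 1) g (Complex.exp z)
        = ((k + 1 : ℕ) : ℂ) * (stirl n (k + 1) : ℂ) * Complex.exp (((k + 1 : ℕ) : ℂ) * z)
            * iteratedDeriv (k + 1) g (Complex.exp z)
          + (stirl n k : ℂ) * Complex.exp (((k + 1 : ℕ) : ℂ) * z)
            * iteratedDeriv (k + 1) g (Complex.exp z) := by
      intro k _
      have : stirl (n + 1) (k + 1) = (k + 1) * stirl n (k + 1) + stirl n k := rfl
      rw [this]
      push_cast
      ring
    rw [Finset.sum_congr rfl hsplit, Finset.sum_add_distrib]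
    congr 1
    · -- A part
      rw [Finset.sum_range_succ']
      have hz : (stirl n 0 : ℂ) * (((0 : ℕ) : ℂ) * Complex.exp (((0 : ℕ) : ℂ) * z))
          * iteratedDeriv 0 g (Complex.exp z) = 0 := by norm_num
      rw [hz, add_zero]
      rw [Finset.sum_range_succ]
      have hlast : ((n + 1 : ℕ) : ℂ) * (stirl n (n + 1) : ℂ)
          * Complex.exp (((n + 1 : ℕ) : ℂ) * z) * iteratedDeriv (n + 1) g (Complex.exp z) = 0 := by
        rw [stirl_zero_of_lt n (n + 1) (by omega)]
        norm_num
      rw [hlast, add_zero]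
      refine Finset.sum_congr rfl fun k _ => ?_
      push_cast
      ring
    · -- B part
      refine Finset.sum_congr rfl fun k _ => ?_
      have : Complex.exp (((k + 1 : ℕ) : ℂ) * z) = Complex.exp ((k : ℂ) * z) * Complex.exp z := by
        rw [← Complex.exp_add]
        push_cast
        ring_nf
      rw [this]
      ring
end

section
/- An entire function f of finite order solves the differential equation f‴(z) + (e^z + 1) f″(z) + ((1+i)e^z + 1) f′(z) + (i e^z + 1) f(z) = 0 if and only if there exist constants c_1, c_2 ∈ ℂ such that f(z) = c_1 e^{−iz} + c_2 e^{−z} for all z ∈ ℂ. -/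
open Filter Polynomial

noncomputable def maxMod (f : ℂ → ℂ) (r : ℝ) : ℝ :=
  sSup ((fun z => ‖f z‖) '' Metric.sphere (0 : ℂ) r)

/-- The order of growth `ρ(f) = limsup_{r→∞} log log M(r,f) / log r`, as an extended real. -/
noncomputable def growthOrder (f : ℂ → ℂ) : EReal :=
  Filter.limsup (fun r : ℝ => ((Real.log (Real.log (maxMod f r)) / Real.log r : ℝ) : EReal))
    Filter.atTop

/-- `limsup_{r→∞} log M(r,f) / r`, used to express "mean type". -/
noncomputable def typeLimsup (f : ℂ → ℂ) : EReal :=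
  Filter.limsup (fun r : ℝ => ((Real.log (maxMod f r) / r : ℝ) : EReal)) Filter.atTop

open Complex in
/-- Solve the linear first order ODE `g' = A' g` for entire functions. -/
lemma stmt12.ode1 (g A : ℂ → ℂ) (hg : Differentiable ℂ g) (hA : Differentiable ℂ A)
    (h : ∀ z, deriv g z = deriv A z * g z) :
    ∀ z, g z = g 0 * Complex.exp (A z - A 0) := by
  set h0 : ℂ → ℂ := fun z => g z * Complex.exp (-(A z)) with hh
  have hd : ∀ z, HasDerivAt h0 0 z := by
    intro z
    have h1 : HasDerivAt (fun z => Complex.exp (-(A z)))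
        (-(deriv A z) * Complex.exp (-(A z))) z := by
      simpa [mul_comm] using ((hA z).hasDerivAt.neg).cexp
    have h2 := ((hg z).hasDerivAt.mul h1)
    rw [h z] at h2
    exact h2.congr_deriv (by ring)
  have hconst : ∀ z, h0 z = h0 0 :=
    fun z => is_const_of_deriv_eq_zero (fun z => (hd z).differentiableAt)
      (fun z => (hd z).deriv) z 0
  intro z
  have h1 := hconst z
  simp only [hh] at h1
  have e : Complex.exp (-(A z)) * Complex.exp (A z) = 1 := by
    rw [← Complex.exp_add]; simp
  have : g z = g 0 * Complex.exp (-(A 0)) * Complex.exp (A z) := by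
    calc g z = g z * (Complex.exp (-(A z)) * Complex.exp (A z)) := by rw [e, mul_one]
      _ = (g z * Complex.exp (-(A z))) * Complex.exp (A z) := by ring
      _ = _ := by rw [h1]
  rw [this, Complex.exp_sub, Complex.exp_neg]
  ring

lemma stmt12.deriv_comb (c₁ c₂ a b : ℂ) :
    deriv (fun z => c₁ * Complex.exp (a*z) + c₂ * Complex.exp (b*z))
      = fun z => (c₁*a) * Complex.exp (a*z) + (c₂*b) * Complex.exp (b*z) := by
  funext z
  have h1 : HasDerivAt (fun z => c₁ * Complex.exp (a*z)) ((c₁*a) * Complex.exp (a*z)) z := by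
    have := (((hasDerivAt_id z).const_mul a).cexp).const_mul c₁
    exact this.congr_deriv (by simp only [id_eq]; ring)
  have h2 : HasDerivAt (fun z => c₂ * Complex.exp (b*z)) ((c₂*b) * Complex.exp (b*z)) z := by
    have := (((hasDerivAt_id z).const_mul b).cexp).const_mul c₂
    exact this.congr_deriv (by simp only [id_eq]; ring)
  exact (h1.add h2).deriv

lemma stmt12.entire_deriv {f : ℂ → ℂ} (hf : Differentiable ℂ f) :
    Differentiable ℂ (deriv f) := by
  have := (hf.differentiableOn.analyticOnNhd isOpen_univ).deriv
  rw [← differentiableOn_univ]; exact this.differentiableOn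

lemma stmt12.abs_le_maxMod {f : ℂ → ℂ} (hf : Differentiable ℂ f) (z : ℂ) :
    ‖f z‖ ≤ maxMod f (‖z‖) := by
  apply le_csSup
  · exact ((isCompact_sphere (0:ℂ) (‖z‖)).image_of_continuousOn
      ((continuous_norm.comp hf.continuous).continuousOn)).bddAbove
  · exact ⟨z, by simp [Complex.norm_def], rfl⟩

lemma stmt12.growth_bound {f : ℂ → ℂ} (hf : Differentiable ℂ f) (hord : growthOrder f < ⊤) :
    ∃ ρ C : ℝ, 1 ≤ ρ ∧ 0 < C ∧
      ∀ z : ℂ, ‖f z‖ ≤ C * Real.exp (‖z‖ ^ ρ) := by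
  obtain ⟨b, hb1, hb2⟩ := exists_between hord
  have hbbot : b ≠ ⊥ := fun h => by simp [h] at hb1
  set ρ₀ : ℝ := b.toReal with hρ₀
  have hbco : b = (ρ₀ : EReal) := (EReal.coe_toReal hb2.ne hbbot).symm
  set ρ : ℝ := max ρ₀ 1 with hρ
  have hρ1 : 1 ≤ ρ := le_max_right _ _
  have hev : ∀ᶠ r in atTop,
      ((Real.log (Real.log (maxMod f r)) / Real.log r : ℝ) : EReal) < (ρ₀ : EReal) := by
    rw [← hbco]; exact eventually_lt_of_limsup_lt hb1
  obtain ⟨r₀, hr₀⟩ := hev.exists_forall_of_atTop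
  set R := max r₀ 3 with hR
  have key : ∀ r : ℝ, R ≤ r → maxMod f r ≤ Real.exp (r ^ ρ) := by
    intro r hr
    have hr3 : (3:ℝ) ≤ r := le_trans (le_max_right _ _) hr
    have hrpos : (0:ℝ) < r := by linarith
    have hlogr : (1:ℝ) ≤ Real.log r := by
      rw [show (1:ℝ) = Real.log (Real.exp 1) from (Real.log_exp 1).symm]
      exact Real.log_le_log (Real.exp_pos 1) (le_trans (le_of_lt (by
        have := Real.exp_one_lt_d9; linarith)) hr3)
    have h1 : Real.log (Real.log (maxMod f r)) / Real.log r < ρ₀ := by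
      have := hr₀ r (le_trans (le_max_left _ _) hr)
      exact_mod_cast this
    have h2 : Real.log (Real.log (maxMod f r)) < ρ * Real.log r := by
      have := (div_lt_iff₀ (by linarith : (0:ℝ) < Real.log r)).mp h1
      calc Real.log (Real.log (maxMod f r)) < ρ₀ * Real.log r := this
        _ ≤ ρ * Real.log r := by
            apply mul_le_mul_of_nonneg_right (le_max_left _ _) (by linarith)
    have hrρpos : (0:ℝ) < r ^ ρ := Real.rpow_pos_of_pos hrpos ρ
    have hrρ1 : (1:ℝ) ≤ r ^ ρ := by
      calc (1:ℝ) ≤ r := by linarith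
        _ = r ^ (1:ℝ) := (Real.rpow_one r).symm
        _ ≤ r ^ ρ := Real.rpow_le_rpow_of_exponent_le (by linarith) hρ1
    by_cases hM : Real.log (maxMod f r) ≤ r ^ ρ
    · by_cases hM0 : 0 < maxMod f r
      · calc maxMod f r = Real.exp (Real.log (maxMod f r)) := (Real.exp_log hM0).symm
          _ ≤ Real.exp (r ^ ρ) := Real.exp_le_exp.mpr hM
      · exact le_trans (le_of_not_gt hM0) (le_of_lt (Real.exp_pos _))
    · exfalso
      push_neg at hM
      have h3 : Real.log (r ^ ρ) < Real.log (Real.log (maxMod f r)) :=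
        Real.log_lt_log hrρpos hM
      rw [Real.log_rpow hrpos] at h3
      linarith
  obtain ⟨C₀, hC₀⟩ := (isCompact_closedBall (0:ℂ) R).exists_bound_of_continuousOn
    (hf.continuous.continuousOn (s := Metric.closedBall 0 R))
  refine ⟨ρ, max C₀ 1, hρ1, lt_of_lt_of_le one_pos (le_max_right _ _), fun z => ?_⟩
  have hexp1 : (1:ℝ) ≤ Real.exp (‖z‖ ^ ρ) := by
    rw [show (1:ℝ) = Real.exp 0 from (Real.exp_zero).symm]
    exact Real.exp_le_exp.mpr (Real.rpow_nonneg (norm_nonneg z) ρ)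
  by_cases hz : ‖z‖ ≤ R
  · have : ‖f z‖ ≤ C₀ := hC₀ z (by simpa [Metric.mem_closedBall, Complex.dist_eq] using hz)
    calc ‖f z‖ ≤ C₀ := this
      _ ≤ max C₀ 1 := le_max_left _ _
      _ ≤ max C₀ 1 * Real.exp (‖z‖ ^ ρ) := by
          nlinarith [lt_of_lt_of_le one_pos (le_max_right C₀ 1)]
  · push_neg at hz
    calc ‖f z‖ ≤ maxMod f (‖z‖) := stmt12.abs_le_maxMod hf z
      _ ≤ Real.exp (‖z‖ ^ ρ) := key _ hz.le
      _ ≤ max C₀ 1 * Real.exp (‖z‖ ^ ρ) :=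
          le_mul_of_one_le_left (Real.exp_pos _).le (le_max_right _ _)

lemma stmt12.cauchy_step {F : ℂ → ℂ} (hF : Differentiable ℂ F) (B : ℝ → ℝ)
    (hB : ∀ z : ℂ, ‖F z‖ ≤ B (‖z‖))
    (hmono : ∀ r s : ℝ, 0 ≤ r → r ≤ s → B r ≤ B s) :
    ∀ z : ℂ, ‖deriv F z‖ ≤ B (‖z‖ + 1) := by
  intro z
  have h := Complex.norm_deriv_le_of_forall_mem_sphere_norm_le (c := z) (R := 1)
    one_pos hF.diffContOnCl (C := B (‖z‖ + 1)) ?_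
  · simpa using h
  · intro w hw
    have hw1 : ‖w - z‖ = 1 := by
      simpa [Complex.dist_eq] using (Metric.mem_sphere.mp hw)
    have : ‖w‖ ≤ ‖z‖ + 1 := by
      calc ‖w‖ = ‖z + (w - z)‖ := by ring_nf
        _ ≤ ‖z‖ + ‖w - z‖ := norm_add_le _ _
        _ = ‖z‖ + 1 := by rw [hw1]
    calc ‖F w‖ ≤ B (‖w‖) := hB w
      _ ≤ B (‖z‖ + 1) := hmono _ _ (norm_nonneg w) this

lemma stmt12.ev_exp_beats (ρ K : ℝ) (hρ : 1 ≤ ρ) :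
    ∀ᶠ r : ℝ in atTop, (r + Real.pi + 2) ^ ρ + K < Real.exp r := by
  have h1 : Tendsto (fun r : ℝ => Real.exp r / r ^ ρ) atTop atTop :=
    tendsto_exp_div_rpow_atTop ρ
  have h2 := h1.eventually_ge_atTop (2 ^ ρ + 1)
  filter_upwards [h2, eventually_ge_atTop (Real.pi + 2), eventually_ge_atTop (1:ℝ),
    eventually_ge_atTop (K+1)] with r hr hrπ hr1 hrK
  have hrpos : (0:ℝ) < r := by linarith
  have hrρpos : (0:ℝ) < r ^ ρ := Real.rpow_pos_of_pos hrpos ρ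
  have hb : (r + Real.pi + 2) ^ ρ ≤ 2 ^ ρ * r ^ ρ := by
    have : r + Real.pi + 2 ≤ 2 * r := by linarith
    calc (r + Real.pi + 2) ^ ρ ≤ (2 * r) ^ ρ :=
        Real.rpow_le_rpow (by positivity) this (by linarith)
      _ = 2 ^ ρ * r ^ ρ := Real.mul_rpow (by norm_num) hrpos.le
  have hexp : (2 ^ ρ + 1) * r ^ ρ ≤ Real.exp r := by
    calc (2 ^ ρ + 1) * r ^ ρ ≤ (Real.exp r / r ^ ρ) * r ^ ρ :=
        mul_le_mul_of_nonneg_right hr hrρpos.le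
      _ = Real.exp r := by field_simp
  have hrρK : K + 1 ≤ r ^ ρ := by
    calc K + 1 ≤ r := hrK
      _ = r ^ (1:ℝ) := (Real.rpow_one r).symm
      _ ≤ r ^ ρ := Real.rpow_le_rpow_of_exponent_le hr1 hρ
  nlinarith [hrρpos]

open Complex in
/-- A finite order entire function `f` solves
`f‴ + (e^z+1)f″ + ((1+i)e^z+1)f′ + (ie^z+1)f = 0` iff `f(z) = c₁e^{−iz} + c₂e^{−z}` for some
constants `c₁, c₂ ∈ ℂ`. -/
theorem stmt12 (f : ℂ → ℂ) (hf : Differentiable ℂ f) (hord : growthOrder f < ⊤) :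
    (∀ z : ℂ, iteratedDeriv 3 f z + (Complex.exp z + 1) * iteratedDeriv 2 f z
        + ((1 + Complex.I) * Complex.exp z + 1) * deriv f z
        + (Complex.I * Complex.exp z + 1) * f z = 0) ↔
    ∃ c₁ c₂ : ℂ, ∀ z : ℂ,
      f z = c₁ * Complex.exp (-Complex.I * z) + c₂ * Complex.exp (-z) := by
  have hf' : Differentiable ℂ (deriv f) := stmt12.entire_deriv hf
  have hf'' : Differentiable ℂ (deriv (deriv f)) := stmt12.entire_deriv hf'
  have hi2 : iteratedDeriv 2 f = deriv (deriv f) := by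
    rw [show (2:ℕ) = 1+1 from rfl, iteratedDeriv_succ, iteratedDeriv_one]
  have hi3 : iteratedDeriv 3 f = deriv (deriv (deriv f)) := by
    rw [show (3:ℕ) = 2+1 from rfl, iteratedDeriv_succ, hi2]
  constructor
  · intro hODE
    -- the auxiliary function g = f'' + (1+i)f' + i f
    set g : ℂ → ℂ := fun z => deriv (deriv f) z + (1+I) * deriv f z + I * f z with hgdef
    have hg : Differentiable ℂ g :=
      (hf''.add (hf'.const_mul (1+I))).add (hf.const_mul I)
    have hgd : ∀ z, HasDerivAt g
        (deriv (deriv (deriv f)) z + (1+I) * deriv (deriv f) z + I * deriv f z) z := by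
      intro z
      exact (((hf'' z).hasDerivAt.add (((hf' z).hasDerivAt).const_mul (1+I))).add
        (((hf z).hasDerivAt).const_mul I))
    -- g satisfies g' = (i - e^z) g
    have hgODE : ∀ z, deriv g z = deriv (fun z => I*z - Complex.exp z) z * g z := by
      intro z
      have hA : deriv (fun z : ℂ => I*z - Complex.exp z) z = I - Complex.exp z := by
        have h1 : HasDerivAt (fun z : ℂ => I*z) I z := by
          simpa using (hasDerivAt_id z).const_mul I
        exact (h1.sub (Complex.hasDerivAt_exp z)).deriv
      rw [hA, (hgd z).deriv]
      simp only [hgdef]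
      have h := hODE z
      rw [hi2, hi3] at h
      linear_combination h - (deriv f z + f z) * Complex.I_sq
    have hgsol : ∀ z, g z = g 0 * Complex.exp (I*z - Complex.exp z + 1) := by
      have hA : Differentiable ℂ (fun z : ℂ => I*z - Complex.exp z) :=
        (differentiable_id.const_mul I).sub Complex.differentiable_exp
      have := stmt12.ode1 g (fun z => I*z - Complex.exp z) hg hA hgODE
      intro z
      have harg : (I*z - Complex.exp z) - (I*(0:ℂ) - Complex.exp 0)
          = I*z - Complex.exp z + 1 := by rw [Complex.exp_zero]; ring
      rw [this z, harg]
    -- if g 0 ≠ 0 we contradict finite order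
    have hc0 : g 0 = 0 := by
      by_contra hc
      obtain ⟨ρ, C, hρ1, hC, hb0⟩ := stmt12.growth_bound hf hord
      set B₀ : ℝ → ℝ := fun R => C * Real.exp (R ^ ρ) with hB₀
      have hmono : ∀ r s : ℝ, 0 ≤ r → r ≤ s → B₀ r ≤ B₀ s := by
        intro r s hr hrs
        exact mul_le_mul_of_nonneg_left (Real.exp_le_exp.mpr
          (Real.rpow_le_rpow hr hrs (by linarith))) hC.le
      have hb1 : ∀ z : ℂ, ‖deriv f z‖ ≤ B₀ (‖z‖ + 1) :=
        stmt12.cauchy_step hf B₀ hb0 hmono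
      have hb2 : ∀ z : ℂ, ‖deriv (deriv f) z‖ ≤ B₀ (‖z‖ + 1 + 1) := by
        have := stmt12.cauchy_step hf' (fun R => B₀ (R + 1)) hb1
          (fun r s hr hrs => hmono _ _ (by linarith) (by linarith))
        exact this
      have habsI : ‖1 + I‖ ≤ 2 := by
        calc ‖1 + I‖ ≤ ‖(1:ℂ)‖ + ‖I‖ := norm_add_le _ _
          _ = 2 := by rw [norm_one, Complex.norm_I]; norm_num
      have hgb : ∀ z : ℂ, ‖g z‖ ≤ 4 * C * Real.exp ((‖z‖ + 2) ^ ρ) := by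
        intro z
        have e0 : B₀ (‖z‖) ≤ C * Real.exp ((‖z‖ + 2) ^ ρ) :=
          hmono _ _ (norm_nonneg z) (by linarith)
        have e1 : B₀ (‖z‖ + 1) ≤ C * Real.exp ((‖z‖ + 2) ^ ρ) :=
          hmono _ _ (by positivity) (by linarith)
        have e2 : B₀ (‖z‖ + 1 + 1) ≤ C * Real.exp ((‖z‖ + 2) ^ ρ) :=
          hmono _ _ (by positivity) (by linarith)
        have h2 := hb2 z
        have h1 := hb1 z
        have h0 := hb0 z
        have hI1 : ‖(1+I) * deriv f z‖ ≤ 2 * B₀ (‖z‖ + 1) := by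
          rw [norm_mul]
          exact mul_le_mul habsI h1 (norm_nonneg _) (by norm_num)
        have hI0 : ‖I * f z‖ ≤ B₀ (‖z‖) := by
          rw [norm_mul, Complex.norm_I, one_mul]; exact h0
        have hB0nn : (0:ℝ) ≤ B₀ (‖z‖ + 1) := le_trans (norm_nonneg _) h1
        calc ‖g z‖
            ≤ ‖deriv (deriv f) z + (1+I) * deriv f z‖ + ‖I * f z‖ := by
              rw [hgdef]; exact norm_add_le _ _
          _ ≤ ‖deriv (deriv f) z‖ + ‖(1+I) * deriv f z‖
              + ‖I * f z‖ := by
              have := norm_add_le (deriv (deriv f) z) ((1+I) * deriv f z)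
              linarith
          _ ≤ B₀ (‖z‖ + 1 + 1) + 2 * B₀ (‖z‖ + 1) + B₀ (‖z‖) := by
              linarith
          _ ≤ 4 * C * Real.exp ((‖z‖ + 2) ^ ρ) := by
              nlinarith [Real.exp_pos ((‖z‖ + 2) ^ ρ)]
      -- evaluate along z = r + πi
      set c : ℝ := ‖g 0‖ with hcabs
      have hcpos : 0 < c := by
        simpa [hcabs] using (norm_pos_iff.mpr hc)
      set K : ℝ := Real.log (4*C) - Real.log c + Real.pi - 1 with hK
      obtain ⟨r, hrprop⟩ := ((stmt12.ev_exp_beats ρ K hρ1).and (eventually_ge_atTop (0:ℝ))).exists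
      obtain ⟨hrev, hr0⟩ := hrprop
      set z : ℂ := (r:ℂ) + Real.pi * I with hz
      have hez : Complex.exp z = -(Real.exp r : ℂ) := by
        rw [hz, Complex.exp_add, Complex.exp_pi_mul_I, ← Complex.ofReal_exp]
        ring
      have habsz : ‖z‖ ≤ r + Real.pi := by
        calc ‖z‖ ≤ ‖(r:ℂ)‖ + ‖((Real.pi:ℂ) * I)‖ :=
            norm_add_le _ _
          _ = |r| + |Real.pi| := by simp
          _ = r + Real.pi := by
              rw [_root_.abs_of_nonneg hr0, _root_.abs_of_nonneg Real.pi_nonneg]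
      have hre : (I*z - Complex.exp z + 1).re = Real.exp r + 1 - Real.pi := by
        rw [hez, hz]
        simp [Complex.add_re, Complex.mul_re, Complex.exp_ofReal_re]
        ring
      have hgzv : ‖g z‖ = c * Real.exp (Real.exp r + 1 - Real.pi) := by
        rw [hgsol z, norm_mul, Complex.norm_exp, hre]
      have hineq : c * Real.exp (Real.exp r + 1 - Real.pi)
          ≤ 4 * C * Real.exp ((r + Real.pi + 2) ^ ρ) := by
        rw [← hgzv]
        calc ‖g z‖ ≤ 4 * C * Real.exp ((‖z‖ + 2) ^ ρ) := hgb z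
          _ ≤ 4 * C * Real.exp ((r + Real.pi + 2) ^ ρ) := by
              apply mul_le_mul_of_nonneg_left _ (by linarith)
              apply Real.exp_le_exp.mpr
              apply Real.rpow_le_rpow (by positivity) (by linarith) (by linarith)
      have hlog := Real.log_le_log (by positivity) hineq
      rw [Real.log_mul (by positivity) (Real.exp_ne_zero _), Real.log_exp,
        Real.log_mul (by positivity) (Real.exp_ne_zero _), Real.log_exp] at hlog
      rw [hK] at hrev
      linarith
    have hgz : ∀ z, g z = 0 := by
      intro z; rw [hgsol z, hc0, zero_mul]
    -- now solve f'' + (1+i)f' + i f = 0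
    set u : ℂ → ℂ := fun z => deriv f z + f z with hudef
    have hu : Differentiable ℂ u := hf'.add hf
    have hud : ∀ z, HasDerivAt u (deriv (deriv f) z + deriv f z) z :=
      fun z => (hf' z).hasDerivAt.add (hf z).hasDerivAt
    have huODE : ∀ z, deriv u z = deriv (fun z : ℂ => (-I) * z) z * u z := by
      intro z
      have hA : deriv (fun z : ℂ => (-I) * z) z = -I := by
        simpa using ((hasDerivAt_id z).const_mul (-I)).deriv
      rw [hA, (hud z).deriv, hudef]
      have h := hgz z
      rw [hgdef] at h
      simp only at h ⊢
      linear_combination h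
    have husol : ∀ z, u z = u 0 * Complex.exp ((-I) * z) := by
      have := stmt12.ode1 u (fun z => (-I)*z) hu (differentiable_id.const_mul (-I)) huODE
      intro z
      rw [this z]
      congr 1
      congr 1
      ring
    have h1mI : (1:ℂ) - I ≠ 0 := by
      intro h
      have := congrArg Complex.im h
      simp at this
    set c₁ : ℂ := u 0 / (1 - I) with hc₁
    set h0 : ℂ → ℂ := fun z => f z * Complex.exp z - c₁ * Complex.exp ((1-I)*z) with hh0
    have hhd : ∀ z, HasDerivAt h0 0 z := by
      intro z
      have ha : HasDerivAt (fun z => f z * Complex.exp z)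
          (deriv f z * Complex.exp z + f z * Complex.exp z) z :=
        (hf z).hasDerivAt.mul (Complex.hasDerivAt_exp z)
      have hb : HasDerivAt (fun z => c₁ * Complex.exp ((1-I)*z))
          (c₁ * (Complex.exp ((1-I)*z) * ((1-I)*1))) z :=
        (((hasDerivAt_id z).const_mul (1-I)).cexp).const_mul c₁
      have hc : HasDerivAt h0
          (deriv f z * Complex.exp z + f z * Complex.exp z
            - c₁ * (Complex.exp ((1-I)*z) * ((1-I)*1))) z := ha.sub hb
      convert hc using 1
      have hu0 : deriv f z + f z = u 0 * Complex.exp ((-I)*z) := by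
        rw [← husol z]
      have hc₁m : c₁ * (1-I) = u 0 := by
        rw [hc₁]; field_simp
      have hee : Complex.exp ((-I)*z) * Complex.exp z = Complex.exp ((1-I)*z) := by
        rw [← Complex.exp_add]; ring_nf
      calc (0:ℂ) = (deriv f z + f z) * Complex.exp z - u 0 * Complex.exp ((1-I)*z) := by
            rw [hu0, mul_assoc, hee]; ring
        _ = deriv f z * Complex.exp z + f z * Complex.exp z
            - c₁ * (Complex.exp ((1-I)*z) * ((1-I)*1)) := by
            rw [← hc₁m]; ring
    have hhconst : ∀ z, h0 z = h0 0 :=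
      fun z => is_const_of_deriv_eq_zero (fun z => (hhd z).differentiableAt)
        (fun z => (hhd z).deriv) z 0
    refine ⟨c₁, f 0 - c₁, fun z => ?_⟩
    have heq : f z * Complex.exp z = (f 0 - c₁) + c₁ * Complex.exp ((1-I)*z) := by
      have := hhconst z
      simp only [hh0] at this
      rw [sub_eq_iff_eq_add] at this
      rw [this]
      simp
    apply mul_right_cancel₀ (Complex.exp_ne_zero z)
    rw [heq]
    have e1 : Complex.exp (-I*z) * Complex.exp z = Complex.exp ((1-I)*z) := by
      rw [← Complex.exp_add]; ring_nf
    have e2 : Complex.exp (-z) * Complex.exp z = 1 := by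
      rw [← Complex.exp_add]; simp
    calc (f 0 - c₁) + c₁ * Complex.exp ((1-I)*z)
        = c₁ * (Complex.exp (-I*z) * Complex.exp z)
          + (f 0 - c₁) * (Complex.exp (-z) * Complex.exp z) := by rw [e1, e2]; ring
      _ = (c₁ * Complex.exp (-I * z) + (f 0 - c₁) * Complex.exp (-z)) * Complex.exp z := by ring
  · rintro ⟨c₁, c₂, hfe⟩
    have hfe' : f = fun z => c₁ * Complex.exp ((-Complex.I)*z) + c₂ * Complex.exp ((-1)*z) := by
      funext z; rw [hfe z]; ring_nf
    have hd1 : deriv f = fun z =>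
        (c₁*(-I)) * Complex.exp ((-I)*z) + (c₂*(-1)) * Complex.exp ((-1)*z) := by
      rw [hfe']; exact stmt12.deriv_comb _ _ _ _
    have hd2 : iteratedDeriv 2 f = fun z =>
        (c₁*(-I)*(-I)) * Complex.exp ((-I)*z) + (c₂*(-1)*(-1)) * Complex.exp ((-1)*z) := by
      rw [iteratedDeriv_succ, iteratedDeriv_one, hd1]; exact stmt12.deriv_comb _ _ _ _
    have hd3 : iteratedDeriv 3 f = fun z =>
        (c₁*(-I)*(-I)*(-I)) * Complex.exp ((-I)*z)
          + (c₂*(-1)*(-1)*(-1)) * Complex.exp ((-1)*z) := by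
      rw [show (3:ℕ) = 2+1 from rfl, iteratedDeriv_succ, hd2]; exact stmt12.deriv_comb _ _ _ _
    intro z
    rw [hd1, hd2, hd3, hfe z]
    have he : Complex.exp (-z) = Complex.exp ((-1)*z) := by ring_nf
    rw [he]
    ring_nf
    rw [show (Complex.I:ℂ)^3 = Complex.I^2 * Complex.I from by ring, Complex.I_sq]
    ring
end
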